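/- Let A be a category with pullbacks, (B, F) a pair satisfying axioms (E1)–(E5), and U : A → B a functor preserving pullbacks. Then the class E = U⁻¹(F) of morphisms of A whose image under U lies in F also satisfies (E1)–(E5) on A (where the pullbacks required in (E2) exist in A by assumption). -/
import Mathlib


open CategoryTheory CategoryTheory.Limits

/-- Double extension: a commutative square (top `f₁`, left `a`, right `b`, bottom
`f₀`) all of whose sides are in `F`, such that the pullback of the bottom and right
sides exists and the comparison morphism to it is in `F`. -/
def IsDblExt {D : Type*} [Category D] (F : MorphismProperty D)
    {A₁ A₀ B₁ B₀ : D} (f₁ : A₁ ⟶ B₁) (a : A₁ ⟶ A₀) (b : B₁ ⟶ B₀) (f₀ : A₀ ⟶ B₀) : Prop :=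
  F f₁ ∧ F a ∧ F b ∧ F f₀ ∧
  ∃ (P : D) (pA : P ⟶ A₀) (pB : P ⟶ B₁) (c : A₁ ⟶ P),
    IsPullback pA pB f₀ b ∧ c ≫ pA = a ∧ c ≫ pB = f₁ ∧ F c

/-- (E1): the class contains all isomorphisms. -/
def AxE1 {D : Type*} [Category D] (F : MorphismProperty D) : Prop :=
  ∀ {X Y : D} (f : X ⟶ Y), IsIso f → F f

/-- (E2): pullbacks of morphisms of the class exist and are in the class. -/
def AxE2 {D : Type*} [Category D] (F : MorphismProperty D) : Prop :=
  ∀ {X Y Z : D} (g : Y ⟶ Z) (h : X ⟶ Z), F g →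
    ∃ (P : D) (p₁ : P ⟶ X) (p₂ : P ⟶ Y), IsPullback p₁ p₂ h g ∧ F p₁

/-- (E3): closure under composition. -/
def AxE3 {D : Type*} [Category D] (F : MorphismProperty D) : Prop :=
  ∀ {X Y Z : D} (f : X ⟶ Y) (g : Y ⟶ Z), F f → F g → F (f ≫ g)

/-- (E4): right cancellation. -/
def AxE4 {D : Type*} [Category D] (F : MorphismProperty D) : Prop :=
  ∀ {X Y Z : D} (f : X ⟶ Y) (g : Y ⟶ Z), F (f ≫ g) → F g

/-- (E5): every split epimorphism between morphisms of the class (a square whose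
horizontal arrows are compatibly split epimorphisms and whose vertical arrows are
in the class) is a double extension. -/
def AxE5 {D : Type*} [Category D] (F : MorphismProperty D) : Prop :=
  ∀ {A₁ A₀ B₁ B₀ : D} (a : A₁ ⟶ A₀) (b : B₁ ⟶ B₀)
    (f₁ : A₁ ⟶ B₁) (f₀ : A₀ ⟶ B₀) (s₁ : B₁ ⟶ A₁) (s₀ : B₀ ⟶ A₀),
    F a → F b → f₁ ≫ b = a ≫ f₀ → s₁ ≫ a = b ≫ s₀ →
    s₁ ≫ f₁ = 𝟙 B₁ → s₀ ≫ f₀ = 𝟙 B₀ → IsDblExt F f₁ a b f₀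

/-- if `A` has pullbacks, `(B, F)` satisfies (E1)–(E5), and
`U : A ⥤ B` preserves pullbacks, then the preimage class `E = U⁻¹(F)` satisfies
(E1)–(E5) on `A`. -/
theorem stmt11 {A : Type*} [Category A] {B : Type*} [Category B]
    [HasPullbacks A] (U : A ⥤ B)
    (hU : ∀ {P X Y Z : A} (fst : P ⟶ X) (snd : P ⟶ Y) (f : X ⟶ Z) (g : Y ⟶ Z),
      IsPullback fst snd f g → IsPullback (U.map fst) (U.map snd) (U.map f) (U.map g))
    (F : MorphismProperty B)
    (h1 : AxE1 F) (h2 : AxE2 F) (h3 : AxE3 F) (h4 : AxE4 F) (h5 : AxE5 F) :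
    AxE1 (fun _ _ f => F (U.map f) : MorphismProperty A) ∧
    AxE2 (fun _ _ f => F (U.map f) : MorphismProperty A) ∧
    AxE3 (fun _ _ f => F (U.map f) : MorphismProperty A) ∧
    AxE4 (fun _ _ f => F (U.map f) : MorphismProperty A) ∧
    AxE5 (fun _ _ f => F (U.map f) : MorphismProperty A) := by
  refine ⟨?_, ?_, ?_, ?_, ?_⟩
  · intro X Y f hf
    exact h1 (U.map f) inferInstance
  · intro X Y Z g h hg
    have hP : IsPullback (pullback.fst h g) (pullback.snd h g) h g :=
      IsPullback.of_hasPullback h g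
    obtain ⟨Q, q₁, q₂, hQ, hq₁⟩ := h2 (U.map g) (U.map h) hg
    have hUP := hU _ _ _ _ hP
    refine ⟨pullback h g, pullback.fst h g, pullback.snd h g, hP, ?_⟩
    have : U.map (pullback.fst h g) =
        (hUP.isoIsPullback _ _ hQ).hom ≫ q₁ := by
      simp
    show F (U.map _)
    rw [this]
    exact h3 _ _ (h1 _ inferInstance) hq₁
  · intro X Y Z f g hf hg
    rw [U.map_comp]
    exact h3 _ _ hf hg
  · intro X Y Z f g hfg
    rw [U.map_comp] at hfg
    exact h4 _ _ hfg
  · intro A₁ A₀ B₁ B₀ a b f₁ f₀ s₁ s₀ ha hb hsq hssq hs₁ hs₀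
    obtain ⟨hf₁, ha', hb', hf₀, Q, qA, qB, c, hQ, hc₁, hc₂, hc⟩ :=
      h5 (U.map a) (U.map b) (U.map f₁) (U.map f₀) (U.map s₁) (U.map s₀)
        ha hb (by rw [← U.map_comp, ← U.map_comp, hsq])
        (by rw [← U.map_comp, ← U.map_comp, hssq])
        (by rw [← U.map_comp, hs₁, U.map_id]) (by rw [← U.map_comp, hs₀, U.map_id])
    have hP : IsPullback (pullback.fst f₀ b) (pullback.snd f₀ b) f₀ b :=
      IsPullback.of_hasPullback f₀ b
    have hUP := hU _ _ _ _ hP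
    refine ⟨hf₁, ha', hb', hf₀, pullback f₀ b, pullback.fst f₀ b, pullback.snd f₀ b,
      hP.lift a f₁ hsq.symm, hP, by simp, by simp, ?_⟩
    have key : U.map (hP.lift a f₁ hsq.symm) = c ≫ (hUP.isoIsPullback _ _ hQ).inv := by
      apply hUP.hom_ext
      · rw [Category.assoc, IsPullback.isoIsPullback_inv_fst, hc₁, ← U.map_comp,
          IsPullback.lift_fst]
      · rw [Category.assoc, IsPullback.isoIsPullback_inv_snd, hc₂, ← U.map_comp,
          IsPullback.lift_snd]
    show F (U.map _)
    rw [key]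
    exact h3 _ _ hc (h1 _ inferInstance)
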